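/- Let r ≥ 2 and n ≥ 2r+1 be integers. If G is a K_{r+1}-free graph on n vertices with e(G) ≥ t_r(n) − ⌊n/r⌋ + 2, then G is r-partite, i.e., its vertex set can be partitioned into r independent sets. -/

import Mathlib

open Finset SimpleGraph


namespace Brouwer

/-- number of vertices of `Fin n` with residue `j` mod `r` -/
def cnt (n r j : ℕ) : ℕ := #(Finset.univ.filter fun v : Fin n => v.val % r = j)

lemma cnt_ge {n r j : ℕ} (hr : 0 < r) (hj : j < r) : n / r ≤ cnt n r j := by
  classical
  have hmem : ∀ i : Fin (n / r), j + i.val * r < n := by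
    intro i
    have h2 : (i.val + 1) * r ≤ (n / r) * r := Nat.mul_le_mul_right r i.2
    have h3 : (n / r) * r ≤ n := Nat.div_mul_le_self n r
    calc j + i.val * r < r + i.val * r := by omega
    _ = (i.val + 1) * r := by ring
    _ ≤ n := le_trans h2 h3
  have key : #(Finset.univ : Finset (Fin (n / r)))
      ≤ #(Finset.univ.filter fun v : Fin n => v.val % r = j) :=
    Finset.card_le_card_of_injOn (fun i : Fin (n / r) => (⟨j + i.val * r, hmem i⟩ : Fin n))
      (fun i _ => by
        simp only [mem_coe, mem_filter, mem_univ, true_and, Fin.val_mk]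
        rw [Nat.add_mul_mod_self_right, Nat.mod_eq_of_lt hj])
      (fun a _ b _ hab => by
        have h1 : j + a.val * r = j + b.val * r := congrArg Fin.val hab
        have h2 : a.val * r = b.val * r := by omega
        exact Fin.ext (Nat.eq_of_mul_eq_mul_right hr h2))
  rw [cnt]
  calc n / r = #(Finset.univ : Finset (Fin (n / r))) := by simp
  _ ≤ _ := key

lemma cnt_le {n r j : ℕ} (hr : 0 < r) : cnt n r j ≤ n / r + 1 := by
  classical
  have key : cnt n r j ≤ #(Finset.range (n / r + 1)) := by
    apply Finset.card_le_card_of_injOn (fun v : Fin n => v.val / r)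
    · intro v _
      simp only [mem_coe, mem_range]
      have : v.val / r ≤ n / r := Nat.div_le_div_right (le_of_lt v.2)
      omega
    · intro a ha b hb hab
      simp only [coe_filter, Set.mem_setOf_eq, mem_univ, true_and] at ha hb
      have ha' := Nat.div_add_mod a.val r
      have hb' := Nat.div_add_mod b.val r
      have hmul : r * (a.val / r) = r * (b.val / r) := by
        simp only at hab
        rw [hab]
      exact Fin.ext (by omega)
  simpa using key

lemma sum_cnt {n r : ℕ} (hr : 0 < r) : ∑ j ∈ Finset.range r, cnt n r j = n := by
  classical
  have key := Finset.card_eq_sum_card_fiberwise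
    (f := fun v : Fin n => v.val % r) (s := Finset.univ) (t := Finset.range r)
    (fun v _ => Finset.mem_range.2 (Nat.mod_lt _ hr))
  simp only [Finset.card_univ, Fintype.card_fin] at key
  simp only [cnt]
  exact key.symm

lemma sum_cnt_sq {n r : ℕ} (hr : 0 < r) :
    ∑ v : Fin n, cnt n r (v.val % r) = ∑ j ∈ Finset.range r, cnt n r j * cnt n r j := by
  classical
  rw [← Finset.sum_fiberwise_of_maps_to
    (g := fun v : Fin n => v.val % r) (t := Finset.range r)
    (fun v _ => Finset.mem_range.2 (Nat.mod_lt _ hr)) (fun v => cnt n r (v.val % r))]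
  refine Finset.sum_congr rfl fun j _ => ?_
  calc ∑ v ∈ Finset.univ.filter (fun v : Fin n => v.val % r = j), cnt n r (v.val % r)
      = ∑ v ∈ Finset.univ.filter (fun v : Fin n => v.val % r = j), cnt n r j :=
        Finset.sum_congr rfl (fun v hv => by rw [(Finset.mem_filter.1 hv).2])
    _ = cnt n r j * cnt n r j := by rw [Finset.sum_const, smul_eq_mul, ← cnt]

lemma turan_degree {n r : ℕ} (v : Fin n) :
    (turanGraph n r).degree v + cnt n r (v.val % r) = n := by
  classical
  have hnb : (turanGraph n r).neighborFinset v
      = Finset.univ.filter fun w : Fin n => ¬ (w.val % r = v.val % r) := by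
    ext w
    rw [mem_neighborFinset, mem_filter]
    simp only [mem_univ, true_and, turanGraph]
    exact ⟨fun h => fun hc => h hc.symm, fun h => fun hc => h hc.symm⟩
  rw [SimpleGraph.degree, hnb, cnt, add_comm]
  have key := Finset.card_filter_add_card_filter_not
    (s := (Finset.univ : Finset (Fin n))) (p := fun w : Fin n => w.val % r = v.val % r)
  simpa using key

lemma two_turan {n r : ℕ} (hr : 0 < r) :
    2 * #(turanGraph n r).edgeFinset + (2 * (n / r) + 1) * n
      = n * n + r * ((n / r) * (n / r) + n / r) := by
  classical
  have hand : ∑ v : Fin n, (turanGraph n r).degree v = 2 * #(turanGraph n r).edgeFinset :=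
    SimpleGraph.sum_degrees_eq_twice_card_edges _
  have h1 : 2 * #(turanGraph n r).edgeFinset + ∑ v : Fin n, cnt n r (v.val % r) = n * n := by
    rw [← hand, ← Finset.sum_add_distrib]
    rw [Finset.sum_congr rfl (fun v _ => turan_degree v)]
    simp [Finset.card_univ, mul_comm]
  have h2 : (∑ v : Fin n, cnt n r (v.val % r)) + r * ((n / r) * (n / r) + n / r)
      = (2 * (n / r) + 1) * n := by
    rw [sum_cnt_sq hr]
    have key : ∀ j ∈ Finset.range r,
        cnt n r j * cnt n r j + ((n / r) * (n / r) + n / r) = (2 * (n / r) + 1) * cnt n r j := by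
      intro j hj
      have hge := cnt_ge (n := n) hr (Finset.mem_range.1 hj)
      have hle := cnt_le (n := n) (j := j) hr
      have hcase : cnt n r j = n / r ∨ cnt n r j = n / r + 1 := by omega
      rcases hcase with h | h <;> rw [h] <;> ring
    calc (∑ j ∈ Finset.range r, cnt n r j * cnt n r j) + r * ((n / r) * (n / r) + n / r)
        = ∑ j ∈ Finset.range r, (cnt n r j * cnt n r j + ((n / r) * (n / r) + n / r)) := by
          rw [Finset.sum_add_distrib, Finset.sum_const, Finset.card_range, smul_eq_mul]
      _ = ∑ j ∈ Finset.range r, (2 * (n / r) + 1) * cnt n r j := Finset.sum_congr rfl key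
      _ = (2 * (n / r) + 1) * ∑ j ∈ Finset.range r, cnt n r j := by rw [Finset.mul_sum]
      _ = (2 * (n / r) + 1) * n := by rw [sum_cnt hr]
  omega

lemma turan_succ {m r : ℕ} (hr : 0 < r) :
    2 * #(turanGraph (m + 1) r).edgeFinset + 2 * (m / r)
      = 2 * #(turanGraph m r).edgeFinset + 2 * m := by
  classical
  have h1 := two_turan (n := m + 1) (r := r) hr
  have h2 := two_turan (n := m) (r := r) hr
  by_cases hd : r ∣ m + 1
  · have hsd : (m + 1) / r = m / r + 1 := Nat.succ_div_of_dvd hd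
    have hq : ((m + 1) / r) * r = m + 1 := Nat.div_mul_cancel hd
    rw [hsd] at h1 hq
    generalize hgen : m / r = q at h1 h2 hq ⊢
    zify at h1 h2 hq ⊢
    linear_combination h1 - h2 + 2 * hq
  · have hsd : (m + 1) / r = m / r := by rw [Nat.succ_div, if_neg hd, add_zero]
    rw [hsd] at h1
    generalize hgen : m / r = q at h1 h2 ⊢
    zify at h1 h2 ⊢
    linear_combination h1 - h2

end Brouwer


namespace Brouwer2

variable {V : Type*} [Fintype V] [DecidableEq V]

/-- split a filter's cardinality by an extra predicate -/
lemma filter_split {s : Finset V} (p q : V → Prop) [DecidablePred p] [DecidablePred q] :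
    #(s.filter p) = #(s.filter fun x => p x ∧ q x) + #(s.filter fun x => p x ∧ ¬ q x) := by
  have key := Finset.card_filter_add_card_filter_not (s := s.filter p) (p := q)
  rw [Finset.filter_filter, Finset.filter_filter] at key
  omega

lemma filter_split_pairs {s : Finset (V × V)} (p q : V × V → Prop)
    [DecidablePred p] [DecidablePred q] :
    #(s.filter p) = #(s.filter fun x => p x ∧ q x) + #(s.filter fun x => p x ∧ ¬ q x) := by
  have key := Finset.card_filter_add_card_filter_not (s := s.filter p) (p := q)
  rw [Finset.filter_filter, Finset.filter_filter] at key
  omega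

variable (G : SimpleGraph V) [DecidableRel G.Adj] {r : ℕ} (c' : V → Fin r)

lemma same_class_pairs :
    #((Finset.univ ×ˢ Finset.univ).filter fun p : V × V => c' p.1 = c' p.2)
      = ∑ i : Fin r, #(Finset.univ.filter fun a => c' a = i)
          * #(Finset.univ.filter fun a => c' a = i) := by
  classical
  rw [Finset.card_eq_sum_card_fiberwise
    (f := fun p : V × V => c' p.1) (t := Finset.univ) (fun p _ => Finset.mem_univ _)]
  refine Finset.sum_congr rfl fun i _ => ?_
  have hset : ((Finset.univ ×ˢ Finset.univ).filter fun p : V × V => c' p.1 = c' p.2).filter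
      (fun p => c' p.1 = i)
      = (Finset.univ.filter fun a => c' a = i) ×ˢ (Finset.univ.filter fun a => c' a = i) := by
    ext p
    simp only [Finset.mem_filter, Finset.mem_product, Finset.mem_univ, true_and]
    constructor
    · rintro ⟨h1, h2⟩
      exact ⟨h2, h1 ▸ h2⟩
    · rintro ⟨h1, h2⟩
      exact ⟨h1.trans h2.symm, h1⟩
  rw [hset, Finset.card_product]

lemma adj_pairs :
    #((Finset.univ ×ˢ Finset.univ).filter fun p : V × V => G.Adj p.1 p.2)
      = 2 * #G.edgeFinset := by
  classical
  rw [Finset.card_eq_sum_card_fiberwise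
    (f := fun p : V × V => p.1) (t := Finset.univ) (fun p _ => Finset.mem_univ _)]
  rw [← SimpleGraph.sum_degrees_eq_twice_card_edges]
  refine Finset.sum_congr rfl fun a _ => ?_
  have hset : ((Finset.univ ×ˢ Finset.univ).filter fun p : V × V => G.Adj p.1 p.2).filter
      (fun p => p.1 = a) = {a} ×ˢ G.neighborFinset a := by
    ext p
    simp only [Finset.mem_filter, Finset.mem_product, Finset.mem_univ, true_and,
      Finset.mem_singleton, SimpleGraph.mem_neighborFinset]
    constructor
    · rintro ⟨h1, h2⟩
      exact ⟨h2, h2 ▸ h1⟩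
    · rintro ⟨h1, h2⟩
      exact ⟨h1 ▸ h2, h1⟩
  rw [hset, Finset.card_product, Finset.card_singleton, one_mul]
  rfl

lemma swap_pairs :
    #((Finset.univ ×ˢ Finset.univ).filter fun p : V × V => c' p.2 < c' p.1 ∧ ¬ G.Adj p.1 p.2)
      = #((Finset.univ ×ˢ Finset.univ).filter
          fun p : V × V => c' p.1 < c' p.2 ∧ ¬ G.Adj p.1 p.2) := by
  classical
  apply Finset.card_nbij' (fun p => p.swap) (fun p => p.swap)
  · intro p hp
    simp only [Finset.mem_coe, Finset.mem_filter, Finset.mem_product, Finset.mem_univ, true_and,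
      Prod.fst_swap, Prod.snd_swap] at hp ⊢
    exact ⟨hp.1, fun h => hp.2 h.symm⟩
  · intro p hp
    simp only [Finset.mem_coe, Finset.mem_filter, Finset.mem_product, Finset.mem_univ, true_and,
      Prod.fst_swap, Prod.snd_swap] at hp ⊢
    exact ⟨hp.1, fun h => hp.2 h.symm⟩
  · intro p _
    simp
  · intro p _
    simp

/-- the master counting identity for a properly coloured graph -/
lemma master (proper : ∀ a b : V, G.Adj a b → c' a ≠ c' b) :
    Fintype.card V * Fintype.card V
      = (∑ i : Fin r, #(Finset.univ.filter fun a => c' a = i)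
            * #(Finset.univ.filter fun a => c' a = i))
        + 2 * #G.edgeFinset
        + 2 * #((Finset.univ ×ˢ Finset.univ).filter
            fun p : V × V => c' p.1 < c' p.2 ∧ ¬ G.Adj p.1 p.2) := by
  classical
  have hcard : #(Finset.univ ×ˢ Finset.univ : Finset (V × V))
      = Fintype.card V * Fintype.card V := by
    rw [Finset.card_product]
    simp
  have split1 : #((Finset.univ ×ˢ Finset.univ : Finset (V × V)).filter fun p : V × V => c' p.1 = c' p.2)
      + #((Finset.univ ×ˢ Finset.univ : Finset (V × V)).filter fun p : V × V => ¬ (c' p.1 = c' p.2)) = #(Finset.univ ×ˢ Finset.univ : Finset (V × V)) :=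
    Finset.card_filter_add_card_filter_not _
  have split2 : #((Finset.univ ×ˢ Finset.univ : Finset (V × V)).filter fun p : V × V => ¬ (c' p.1 = c' p.2))
      = #((Finset.univ ×ˢ Finset.univ : Finset (V × V)).filter fun p : V × V => ¬ (c' p.1 = c' p.2) ∧ G.Adj p.1 p.2)
        + #((Finset.univ ×ˢ Finset.univ : Finset (V × V)).filter fun p : V × V => ¬ (c' p.1 = c' p.2) ∧ ¬ G.Adj p.1 p.2) :=
    filter_split_pairs _ _
  have hadjeq : ((Finset.univ ×ˢ Finset.univ : Finset (V × V)).filter fun p : V × V => ¬ (c' p.1 = c' p.2) ∧ G.Adj p.1 p.2)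
      = (Finset.univ ×ˢ Finset.univ : Finset (V × V)).filter fun p : V × V => G.Adj p.1 p.2 := by
    ext p
    simp only [Finset.mem_filter]
    exact ⟨fun h => ⟨h.1, h.2.2⟩, fun h => ⟨h.1, proper _ _ h.2, h.2⟩⟩
  have split3 : #((Finset.univ ×ˢ Finset.univ : Finset (V × V)).filter fun p : V × V => ¬ (c' p.1 = c' p.2) ∧ ¬ G.Adj p.1 p.2)
      = #((Finset.univ ×ˢ Finset.univ : Finset (V × V)).filter fun p : V × V => (¬ (c' p.1 = c' p.2) ∧ ¬ G.Adj p.1 p.2)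
            ∧ c' p.1 < c' p.2)
        + #((Finset.univ ×ˢ Finset.univ : Finset (V × V)).filter fun p : V × V => (¬ (c' p.1 = c' p.2) ∧ ¬ G.Adj p.1 p.2)
            ∧ ¬ (c' p.1 < c' p.2)) :=
    filter_split_pairs _ _
  have heq1 : ((Finset.univ ×ˢ Finset.univ : Finset (V × V)).filter fun p : V × V => (¬ (c' p.1 = c' p.2) ∧ ¬ G.Adj p.1 p.2)
        ∧ c' p.1 < c' p.2)
      = (Finset.univ ×ˢ Finset.univ : Finset (V × V)).filter fun p : V × V => c' p.1 < c' p.2 ∧ ¬ G.Adj p.1 p.2 := by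
    ext p
    simp only [Finset.mem_filter]
    exact ⟨fun h => ⟨h.1, h.2.2, h.2.1.2⟩, fun h => ⟨h.1, ⟨ne_of_lt h.2.1, h.2.2⟩, h.2.1⟩⟩
  have heq2 : ((Finset.univ ×ˢ Finset.univ : Finset (V × V)).filter fun p : V × V => (¬ (c' p.1 = c' p.2) ∧ ¬ G.Adj p.1 p.2)
        ∧ ¬ (c' p.1 < c' p.2))
      = (Finset.univ ×ˢ Finset.univ : Finset (V × V)).filter fun p : V × V => c' p.2 < c' p.1 ∧ ¬ G.Adj p.1 p.2 := by
    ext p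
    simp only [Finset.mem_filter]
    constructor
    · rintro ⟨h1, ⟨hne, hna⟩, hnlt⟩
      exact ⟨h1, lt_of_le_of_ne (le_of_not_gt hnlt) (fun hc => hne hc.symm), hna⟩
    · rintro ⟨h1, hlt, hna⟩
      exact ⟨h1, ⟨fun hc => absurd hc.symm (ne_of_lt hlt), hna⟩, not_lt_of_gt hlt⟩
  have hswap := swap_pairs G c'
  rw [heq1, heq2, hswap] at split3
  rw [hadjeq, adj_pairs] at split2
  rw [same_class_pairs] at split1
  omega

end Brouwer2


namespace Brouwer3

variable {V : Type*} [Fintype V] [DecidableEq V]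
variable (G : SimpleGraph V) [DecidableRel G.Adj] {r : ℕ} (c' : V → Fin r)

/-- transversal counting: if no system of representatives of the `U i` is pairwise adjacent,
then there are at least `#(U i₀) * #(U j₀)` non-adjacent cross pairs,
where `(i₀, j₀)` minimises the products. -/
lemma transversal (U : Fin r → Finset V)
    (hUc : ∀ i, ∀ a ∈ U i, c' a = i)
    (hne : ∀ i, (U i).Nonempty)
    (hno : ∀ f : Fin r → V, (∀ i, f i ∈ U i) → ∃ i j, i ≠ j ∧ ¬ G.Adj (f i) (f j))
    (i₀ j₀ : Fin r) (hij : i₀ ≠ j₀)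
    (hmin : ∀ i j, i ≠ j → #(U i₀) * #(U j₀) ≤ #(U i) * #(U j)) :
    #(U i₀) * #(U j₀) ≤ #((Finset.univ ×ˢ Finset.univ).filter
      fun p : V × V => c' p.1 < c' p.2 ∧ ¬ G.Adj p.1 p.2) := by
  classical
  set T := Fintype.piFinset U with hT
  set BadU := (Finset.univ ×ˢ Finset.univ).filter
    (fun p : V × V => (c' p.1 < c' p.2 ∧ ¬ G.Adj p.1 p.2)
      ∧ p.1 ∈ U (c' p.1) ∧ p.2 ∈ U (c' p.2)) with hBadU
  set fam : V × V → Finset (Fin r → V) := fun p => Fintype.piFinset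
    (fun k => if k = c' p.1 then {p.1} else if k = c' p.2 then {p.2} else U k) with hfam
  -- the cover
  have cover : T ⊆ BadU.biUnion fam := by
    intro f hf
    have hfU : ∀ i, f i ∈ U i := Fintype.mem_piFinset.1 hf
    obtain ⟨i, j, hijne, hnadj⟩ := hno f hfU
    have hci : c' (f i) = i := hUc i _ (hfU i)
    have hcj : c' (f j) = j := hUc j _ (hfU j)
    rcases lt_or_gt_of_ne hijne with hlt | hgt
    · have hp : (f i, f j) ∈ BadU := by
        rw [hBadU, Finset.mem_filter]
        refine ⟨Finset.mem_product.2 ⟨Finset.mem_univ _, Finset.mem_univ _⟩, ⟨?_, hnadj⟩, ?_, ?_⟩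
        · rw [hci, hcj]; exact hlt
        · rw [hci]; exact hfU i
        · rw [hcj]; exact hfU j
      refine Finset.mem_biUnion.2 ⟨(f i, f j), hp, ?_⟩
      rw [hfam]
      refine Fintype.mem_piFinset.2 fun k => ?_
      simp only [hci, hcj]
      by_cases hki : k = i
      · subst hki; simp
      · by_cases hkj : k = j
        · subst hkj; simp [hki]
        · simp [hki, hkj, hfU k]
    · have hp : (f j, f i) ∈ BadU := by
        rw [hBadU, Finset.mem_filter]
        refine ⟨Finset.mem_product.2 ⟨Finset.mem_univ _, Finset.mem_univ _⟩,
          ⟨?_, fun h => hnadj h.symm⟩, ?_, ?_⟩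
        · rw [hci, hcj]; exact hgt
        · rw [hcj]; exact hfU j
        · rw [hci]; exact hfU i
      refine Finset.mem_biUnion.2 ⟨(f j, f i), hp, ?_⟩
      rw [hfam]
      refine Fintype.mem_piFinset.2 fun k => ?_
      simp only [hci, hcj]
      by_cases hkj : k = j
      · subst hkj; simp
      · by_cases hki : k = i
        · subst hki; simp [hkj]
        · simp [hki, hkj, hfU k]
  have hTcard : #T = ∏ k : Fin r, #(U k) := by rw [hT]; exact Fintype.card_piFinset U
  have hTpos : 0 < #T := by
    rw [hT]
    exact Finset.card_pos.2 (Fintype.piFinset_nonempty.2 hne)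
  -- per-element bound
  have hfambound : ∀ p ∈ BadU, #(U i₀) * #(U j₀) * #(fam p) ≤ #T := by
    intro p hp
    rw [hBadU, Finset.mem_filter] at hp
    obtain ⟨-, ⟨hlt, -⟩, hp1, hp2⟩ := hp
    set i := c' p.1
    set j := c' p.2
    have hijne : i ≠ j := ne_of_lt hlt
    have hfamcard : #(fam p) = ∏ k ∈ (Finset.univ.erase i).erase j, #(U k) := by
      rw [hfam]
      rw [Fintype.card_piFinset]
      have hi : i ∈ (Finset.univ : Finset (Fin r)) := Finset.mem_univ _
      have hj : j ∈ Finset.univ.erase i := Finset.mem_erase.2 ⟨hijne.symm, Finset.mem_univ _⟩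
      rw [← Finset.mul_prod_erase _ _ hi, ← Finset.mul_prod_erase _ _ hj]
      rw [if_pos rfl]
      rw [if_neg hijne.symm, if_pos rfl]
      simp only [Finset.card_singleton, one_mul]
      refine Finset.prod_congr rfl fun k hk => ?_
      rw [Finset.mem_erase, Finset.mem_erase] at hk
      rw [if_neg hk.2.1, if_neg hk.1]
    have hTsplit : #T = #(U i) * (#(U j) * ∏ k ∈ (Finset.univ.erase i).erase j, #(U k)) := by
      rw [hTcard]
      have hi : i ∈ (Finset.univ : Finset (Fin r)) := Finset.mem_univ _
      have hj : j ∈ Finset.univ.erase i := Finset.mem_erase.2 ⟨hijne.symm, Finset.mem_univ _⟩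
      rw [← Finset.mul_prod_erase _ _ hi, ← Finset.mul_prod_erase _ _ hj]
    rw [hfamcard, hTsplit]
    calc #(U i₀) * #(U j₀) * ∏ k ∈ (Finset.univ.erase i).erase j, #(U k)
        ≤ #(U i) * #(U j) * ∏ k ∈ (Finset.univ.erase i).erase j, #(U k) :=
          Nat.mul_le_mul_right _ (hmin i j hijne)
      _ = #(U i) * (#(U j) * ∏ k ∈ (Finset.univ.erase i).erase j, #(U k)) := by ring
  -- assemble
  have hsum : #T ≤ ∑ p ∈ BadU, #(fam p) :=
    le_trans (Finset.card_le_card cover) (Finset.card_biUnion_le)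
  have hkey : #(U i₀) * #(U j₀) * #T ≤ #BadU * #T := by
    calc #(U i₀) * #(U j₀) * #T ≤ #(U i₀) * #(U j₀) * ∑ p ∈ BadU, #(fam p) :=
          Nat.mul_le_mul_left _ hsum
      _ = ∑ p ∈ BadU, #(U i₀) * #(U j₀) * #(fam p) := by rw [Finset.mul_sum]
      _ ≤ ∑ p ∈ BadU, #T := Finset.sum_le_sum hfambound
      _ = #BadU * #T := by rw [Finset.sum_const, smul_eq_mul]
  have hfin : #(U i₀) * #(U j₀) ≤ #BadU := Nat.le_of_mul_le_mul_right hkey hTpos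
  refine le_trans hfin (Finset.card_le_card ?_)
  rw [hBadU]
  exact Finset.monotone_filter_right _ (fun p _ hp => hp.1)

end Brouwer3


namespace Brouwer4

/-- A `K_{r+1}`-free graph with at least as many edges as the Turán graph is `r`-colourable. -/
lemma of_max_edges {n r : ℕ} (hr : 0 < r) (G : SimpleGraph (Fin n)) [DecidableRel G.Adj]
    (hG : G.CliqueFree (r + 1)) (he : #(turanGraph n r).edgeFinset ≤ #G.edgeFinset) :
    ∃ c : Fin n → Fin r, ∀ u v : Fin n, G.Adj u v → c u ≠ c v := by
  have htm : G.IsTuranMaximal r :=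
    ⟨hG, fun H _ hH => le_trans ((isTuranMaximal_turanGraph hr).2 hH) he⟩
  obtain ⟨iso⟩ := htm.nonempty_iso_turanGraph
  refine ⟨fun x => ⟨(iso x).val % r, Nat.mod_lt _ hr⟩, fun u v huv => ?_⟩
  have hadj : (turanGraph (Fintype.card (Fin n)) r).Adj (iso u) (iso v) :=
    iso.map_adj_iff.2 huv
  simp only [turanGraph] at hadj
  intro hc
  rw [Fin.mk.injEq] at hc
  exact hadj hc

variable {m : ℕ} (v : Fin (m + 1)) (G : SimpleGraph (Fin (m + 1))) [DecidableRel G.Adj]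

lemma comap_cliquefree {k : ℕ} (H : SimpleGraph (Fin m))
    (hH : ∀ a b, H.Adj a b → G.Adj (v.succAbove a) (v.succAbove b))
    (hG : G.CliqueFree k) : H.CliqueFree k := by
  intro s hs
  apply hG (s.map ⟨v.succAbove, Fin.succAbove_right_injective⟩)
  constructor
  · intro x hx y hy hxy
    simp only [Finset.coe_map, Function.Embedding.coeFn_mk, Set.mem_image, Finset.mem_coe] at hx hy
    obtain ⟨a, ha, rfl⟩ := hx
    obtain ⟨b, hb, rfl⟩ := hy
    have hab : a ≠ b := fun h => hxy (by rw [h])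
    exact hH a b (hs.1 ha hb hab)
  · rw [Finset.card_map]
    exact hs.2

lemma comap_edges (H : SimpleGraph (Fin m)) [DecidableRel H.Adj]
    (hH : ∀ a b, H.Adj a b ↔ G.Adj (v.succAbove a) (v.succAbove b)) :
    2 * #H.edgeFinset + 2 * G.degree v = 2 * #G.edgeFinset := by
  classical
  have hdeg : ∀ a : Fin m, H.degree a
      + (if G.Adj (v.succAbove a) v then 1 else 0) = G.degree (v.succAbove a) := by
    intro a
    have hcard : H.degree a = #((G.neighborFinset (v.succAbove a)).erase v) := by
      rw [SimpleGraph.degree]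
      apply Finset.card_nbij (fun b => v.succAbove b)
      · intro b hb
        rw [Finset.mem_coe, SimpleGraph.mem_neighborFinset] at hb
        exact Finset.mem_erase.2 ⟨Fin.succAbove_ne v b, (SimpleGraph.mem_neighborFinset G (v.succAbove a) (v.succAbove b)).2 ((hH a b).1 hb)⟩
      · intro b _ b' _ h
        exact Fin.succAbove_right_injective h
      · intro w hw
        rw [Finset.mem_coe, Finset.mem_erase, SimpleGraph.mem_neighborFinset] at hw
        obtain ⟨b, rfl⟩ := Fin.exists_succAbove_eq hw.1
        exact ⟨b, by rw [Finset.mem_coe, SimpleGraph.mem_neighborFinset]; exact (hH a b).2 hw.2, rfl⟩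
    rw [hcard]
    by_cases hv : v ∈ G.neighborFinset (v.succAbove a)
    · rw [Finset.card_erase_of_mem hv, if_pos ((SimpleGraph.mem_neighborFinset G (v.succAbove a) v).1 hv)]
      have : 0 < #(G.neighborFinset (v.succAbove a)) := Finset.card_pos.2 ⟨v, hv⟩
      rw [SimpleGraph.degree]
      omega
    · rw [Finset.erase_eq_of_notMem hv,
        if_neg (fun h => hv ((SimpleGraph.mem_neighborFinset G (v.succAbove a) v).2 h)), add_zero]
      rfl
  have hsum1 : ∑ a : Fin m, G.degree (v.succAbove a) = ∑ w ∈ Finset.univ.erase v, G.degree w := by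
    apply Finset.sum_nbij (fun a => v.succAbove a)
    · intro a _
      exact Finset.mem_erase.2 ⟨Fin.succAbove_ne v a, Finset.mem_univ _⟩
    · intro a _ b _ h
      exact Fin.succAbove_right_injective h
    · intro w hw
      rw [Finset.coe_erase, Set.mem_diff, Set.mem_singleton_iff] at hw
      obtain ⟨b, rfl⟩ := Fin.exists_succAbove_eq hw.2
      exact ⟨b, by simp, rfl⟩
    · intro a _
      rfl
  have hsum2 : ∑ a : Fin m, (if G.Adj (v.succAbove a) v then 1 else 0) = G.degree v := by
    rw [Finset.sum_boole]
    rw [SimpleGraph.degree]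
    apply Finset.card_nbij (fun a => v.succAbove a)
    · intro a ha
      simp only [Finset.coe_filter, Set.mem_setOf_eq, Finset.mem_filter, Finset.mem_univ, true_and] at ha
      exact (SimpleGraph.mem_neighborFinset G v (v.succAbove a)).2 ha.symm
    · intro a _ b _ h
      exact Fin.succAbove_right_injective h
    · intro w hw
      rw [Finset.mem_coe, SimpleGraph.mem_neighborFinset] at hw
      obtain ⟨b, rfl⟩ := Fin.exists_succAbove_eq (G.ne_of_adj hw).symm
      refine ⟨b, ?_, rfl⟩
      simp only [Finset.coe_filter, Set.mem_setOf_eq, Finset.mem_univ, true_and]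
      exact hw.symm
  have hand1 : ∑ a : Fin m, H.degree a
      = 2 * #H.edgeFinset := SimpleGraph.sum_degrees_eq_twice_card_edges _
  have hand2 : ∑ w : Fin (m + 1), G.degree w = 2 * #G.edgeFinset :=
    SimpleGraph.sum_degrees_eq_twice_card_edges _
  have hsplit : G.degree v + ∑ w ∈ Finset.univ.erase v, G.degree w
      = ∑ w : Fin (m + 1), G.degree w := Finset.add_sum_erase Finset.univ (fun w => G.degree w) (Finset.mem_univ v)
  have hcomb : (∑ a : Fin m, H.degree a)
      + ∑ a : Fin m, (if G.Adj (v.succAbove a) v then 1 else 0)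
      = ∑ a : Fin m, G.degree (v.succAbove a) := by
    rw [← Finset.sum_add_distrib]
    exact Finset.sum_congr rfl fun a _ => hdeg a
  omega

end Brouwer4


namespace Brouwer5

lemma tang1 (c q : ℕ) : (2 * q + 1) * c ≤ c * c + (q * q + q) := by
  rcases le_or_gt c q with h | h
  · nlinarith
  · nlinarith

lemma tang2 (c q : ℕ) : (2 * q + 1) * c + 2 * q ≤ c * c + 2 * c + (q * q + q) := by
  zify
  rcases lt_trichotomy c q with h | rfl | h
  · have h1 : (0 : ℤ) ≤ (q : ℤ) - c := by
      have : (c : ℤ) ≤ q := by exact_mod_cast le_of_lt h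
      linarith
    have h2 : (0 : ℤ) ≤ (q : ℤ) - 1 - c := by
      have : (c : ℤ) + 1 ≤ q := by exact_mod_cast h
      linarith
    nlinarith [mul_nonneg h1 h2]
  · nlinarith []
  · have h1 : (0 : ℤ) ≤ (c : ℤ) - q := by
      have : (q : ℤ) ≤ c := by exact_mod_cast le_of_lt h
      linarith
    have h2 : (0 : ℤ) ≤ (c : ℤ) - q + 1 := by linarith
    nlinarith [mul_nonneg h1 h2]

lemma sum_split {r : ℕ} (g : Fin r → ℕ) (i₀ j₀ : Fin r) (h : i₀ ≠ j₀) :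
    ∑ i, g i = g i₀ + g j₀ + ∑ i ∈ (Finset.univ.erase i₀).erase j₀, g i := by
  rw [← Finset.add_sum_erase _ g (Finset.mem_univ i₀),
    ← Finset.add_sum_erase _ g (Finset.mem_erase.2 ⟨h.symm, Finset.mem_univ j₀⟩)]
  omega

lemma addle (a b : ℕ) (ha : 1 ≤ a) (hb : 1 ≤ b) : a + b ≤ a * b + 1 := by
  nlinarith

lemma card_E2 {r : ℕ} (i₀ j₀ : Fin r) (h : i₀ ≠ j₀) :
    #((Finset.univ.erase i₀).erase j₀) = r - 2 := by
  rw [Finset.card_erase_of_mem (Finset.mem_erase.2 ⟨h.symm, Finset.mem_univ j₀⟩),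
    Finset.card_erase_of_mem (Finset.mem_univ i₀), Finset.card_univ, Fintype.card_fin]
  omega

end Brouwer5

namespace BrouwerMain

set_option maxHeartbeats 1000000 in
theorem aux (r : ℕ) (hr : 2 ≤ r) :
    ∀ n : ℕ, ∀ (G : SimpleGraph (Fin n)) (_ : DecidableRel G.Adj),
      2 * r + 1 ≤ n → G.CliqueFree (r + 1) →
      #(turanGraph n r).edgeFinset + 2 ≤ #G.edgeFinset + n / r →
      ∃ c : Fin n → Fin r, ∀ u v : Fin n, G.Adj u v → c u ≠ c v := by
  intro n
  induction n using Nat.strong_induction_on with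
  | _ n ih =>
  intro G hdec hn hG he
  have hr0 : 0 < r := by omega
  by_cases hbig : #(turanGraph n r).edgeFinset ≤ #G.edgeFinset
  · exact Brouwer4.of_max_edges hr0 G hG hbig
  push_neg at hbig
  by_cases hdeg : ∀ w : Fin n, n ≤ G.degree w + n / r
  · -- minimum degree case: G has at least as many edges as the Turán graph
    exfalso
    have hand : ∑ w : Fin n, G.degree w = 2 * #G.edgeFinset :=
      SimpleGraph.sum_degrees_eq_twice_card_edges _
    have hsum : n * n ≤ 2 * #G.edgeFinset + n * (n / r) := by
      calc n * n = ∑ _w : Fin n, n := by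
            rw [Finset.sum_const, Finset.card_univ, Fintype.card_fin, smul_eq_mul]
      _ ≤ ∑ w : Fin n, (G.degree w + n / r) := Finset.sum_le_sum fun w _ => hdeg w
      _ = 2 * #G.edgeFinset + n * (n / r) := by
            rw [Finset.sum_add_distrib, hand, Finset.sum_const, Finset.card_univ,
              Fintype.card_fin, smul_eq_mul]
    have htu := Brouwer.two_turan (n := n) (r := r) hr0
    have hrq : r * (n / r) ≤ n := by
      rw [mul_comm]
      exact Nat.div_mul_le_self n r
    have hA : r * ((n / r) * (n / r) + (n / r)) ≤ n * ((n / r) + 1) := by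
      have h1 : r * ((n / r) * (n / r) + (n / r)) = (r * (n / r)) * ((n / r) + 1) := by ring
      rw [h1]
      exact Nat.mul_le_mul_right _ hrq
    nlinarith [hsum, htu, hA, hbig]
  push_neg at hdeg
  obtain ⟨v, hv⟩ := hdeg
  have hq2 : 2 ≤ n / r := (Nat.le_div_iff_mul_le hr0).2 (by omega)
  have hq3 : 3 ≤ n / r := by
    by_contra hcon
    have hq : n / r = 2 := by omega
    rw [hq] at he
    omega
  have h3r : 3 * r ≤ n := by
    calc 3 * r ≤ (n / r) * r := Nat.mul_le_mul_right r hq3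
    _ ≤ n := Nat.div_mul_le_self n r
  obtain ⟨m, rfl⟩ : ∃ m, n = m + 1 := ⟨n - 1, by omega⟩
  set G' := G.comap v.succAbove with hG'def
  haveI hdec' : DecidableRel G'.Adj := fun a b => hdec (v.succAbove a) (v.succAbove b)
  have hcf' : G'.CliqueFree (r + 1) :=
    Brouwer4.comap_cliquefree v G G' (fun a b hab => hab) hG
  have hedges := Brouwer4.comap_edges v G G' (fun a b => Iff.rfl)
  have hts := Brouwer.turan_succ (m := m) (r := r) hr0
  have hih : #(turanGraph m r).edgeFinset + 2 ≤ #G'.edgeFinset + m / r := by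
    omega
  obtain ⟨c', hc'⟩ := ih m (by omega) G' hdec' (by omega) hcf' hih
  set A : Finset (Fin m) := Finset.univ.filter (fun a => G.Adj v (v.succAbove a)) with hAdef
  set U : Fin r → Finset (Fin m) := fun i => A.filter (fun a => c' a = i) with hUdef
  have hAdeg : #A = G.degree v := by
    rw [SimpleGraph.degree]
    apply Finset.card_nbij (fun a => v.succAbove a)
    · intro a ha
      rw [hAdef, Finset.mem_coe, Finset.mem_filter] at ha
      exact (SimpleGraph.mem_neighborFinset G v (v.succAbove a)).2 ha.2
    · intro a _ b _ h
      exact Fin.succAbove_right_injective h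
    · intro w hw
      rw [Finset.mem_coe, SimpleGraph.mem_neighborFinset] at hw
      obtain ⟨b, rfl⟩ := Fin.exists_succAbove_eq (G.ne_of_adj hw).symm
      refine ⟨b, ?_, rfl⟩
      rw [Finset.mem_coe, hAdef, Finset.mem_filter]
      exact ⟨Finset.mem_univ _, hw⟩
  have hsplitU : ∑ i : Fin r, #(U i) = #A := by
    rw [hUdef]
    exact (Finset.card_eq_sum_card_fiberwise
      (f := c') (s := A) (t := Finset.univ) (fun a _ => Finset.mem_univ _)).symm
  by_cases hUe : ∃ i, U i = ∅
  · obtain ⟨i, hUi⟩ := hUe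
    refine ⟨fun x => if hx : x = v then i
      else c' (Classical.choose (Fin.exists_succAbove_eq hx)), fun x y hxy => ?_⟩
    by_cases hx : x = v <;> by_cases hy : y = v
    · exact absurd (hx ▸ hy ▸ hxy) (G.irrefl)
    · simp only [dif_pos hx, dif_neg hy]
      set b := Classical.choose (Fin.exists_succAbove_eq hy) with hbdef
      have hb : v.succAbove b = y := Classical.choose_spec (Fin.exists_succAbove_eq hy)
      intro hc
      have hbA : b ∈ A := by
        rw [hAdef, Finset.mem_filter]
        exact ⟨Finset.mem_univ _, by rw [hb, ← hx]; exact hxy⟩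
      have : b ∈ U i := by
        rw [hUdef, Finset.mem_filter]
        exact ⟨hbA, hc.symm⟩
      rw [hUi] at this
      exact absurd this (Finset.notMem_empty b)
    · simp only [dif_neg hx, dif_pos hy]
      set b := Classical.choose (Fin.exists_succAbove_eq hx) with hbdef
      have hb : v.succAbove b = x := Classical.choose_spec (Fin.exists_succAbove_eq hx)
      intro hc
      have hbA : b ∈ A := by
        rw [hAdef, Finset.mem_filter]
        exact ⟨Finset.mem_univ _, by rw [hb, ← hy]; exact hxy.symm⟩
      have : b ∈ U i := by
        rw [hUdef, Finset.mem_filter]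
        exact ⟨hbA, hc⟩
      rw [hUi] at this
      exact absurd this (Finset.notMem_empty b)
    · simp only [dif_neg hx, dif_neg hy]
      have hbx : v.succAbove (Classical.choose (Fin.exists_succAbove_eq hx)) = x :=
        Classical.choose_spec (Fin.exists_succAbove_eq hx)
      have hby : v.succAbove (Classical.choose (Fin.exists_succAbove_eq hy)) = y :=
        Classical.choose_spec (Fin.exists_succAbove_eq hy)
      apply hc'
      show G.Adj (v.succAbove _) (v.succAbove _)
      rw [hbx, hby]
      exact hxy
  · push_neg at hUe
    exfalso
    have hne : ∀ i, (U i).Nonempty := fun i => hUe i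
    have hod : (Finset.univ.offDiag : Finset (Fin r × Fin r)).Nonempty := by
      refine ⟨(⟨0, by omega⟩, ⟨1, by omega⟩), Finset.mem_offDiag.2
        ⟨Finset.mem_univ _, Finset.mem_univ _, ?_⟩⟩
      intro hcon
      rw [Fin.mk.injEq] at hcon
      omega
    obtain ⟨p₀, hp₀mem, hp₀min⟩ := Finset.exists_min_image Finset.univ.offDiag
      (fun p => #(U p.1) * #(U p.2)) hod
    have hij : p₀.1 ≠ p₀.2 := (Finset.mem_offDiag.1 hp₀mem).2.2
    set i₀ := p₀.1
    set j₀ := p₀.2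
    have hmin : ∀ i j, i ≠ j → #(U i₀) * #(U j₀) ≤ #(U i) * #(U j) := fun i j hijne =>
      hp₀min (i, j) (Finset.mem_offDiag.2 ⟨Finset.mem_univ _, Finset.mem_univ _, hijne⟩)
    have hUc : ∀ i, ∀ a ∈ U i, c' a = i := by
      intro i a ha
      rw [hUdef, Finset.mem_filter] at ha
      exact ha.2
    have hno : ∀ f : Fin r → Fin m, (∀ i, f i ∈ U i) →
        ∃ i j, i ≠ j ∧ ¬ G'.Adj (f i) (f j) := by
      intro f hf
      by_contra hcon
      push_neg at hcon
      apply hG (insert v ((Finset.univ : Finset (Fin r)).image fun i => v.succAbove (f i)))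
      have hfinj : Function.Injective fun i => v.succAbove (f i) := by
        intro i j hijf
        have : f i = f j := Fin.succAbove_right_injective hijf
        rw [← hUc i _ (hf i), ← hUc j _ (hf j), this]
      have hvnot : v ∉ (Finset.univ : Finset (Fin r)).image fun i => v.succAbove (f i) := by
        rw [Finset.mem_image]
        rintro ⟨i, -, hi⟩
        exact Fin.succAbove_ne v (f i) hi
      constructor
      · intro x hx y hy hxy
        simp only [Finset.coe_insert, Set.mem_insert_iff, Finset.coe_image, Set.mem_image,
          Finset.mem_coe, Finset.mem_univ, true_and, Set.mem_setOf_eq] at hx hy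
        rcases hx with rfl | ⟨i, -, rfl⟩
        · rcases hy with rfl | ⟨j, -, rfl⟩
          · exact absurd rfl hxy
          · have hj : f j ∈ A := Finset.mem_of_mem_filter _ (hf j)
            rw [hAdef, Finset.mem_filter] at hj
            exact hj.2
        · rcases hy with rfl | ⟨j, -, rfl⟩
          · have hi : f i ∈ A := Finset.mem_of_mem_filter _ (hf i)
            rw [hAdef, Finset.mem_filter] at hi
            exact hi.2.symm
          · have hijne : i ≠ j := by
              intro hcc
              exact hxy (by rw [hcc])
            exact hcon i j hijne
      · rw [Finset.card_insert_of_notMem hvnot, Finset.card_image_of_injective _ hfinj,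
          Finset.card_univ, Fintype.card_fin]
    have htrans := Brouwer3.transversal G' c' U hUc hne hno i₀ j₀ hij hmin
    have hmaster0 := Brouwer2.master G' c' (fun a b hab => hc' a b hab)
    rw [Fintype.card_fin] at hmaster0
    have htwo := Brouwer.two_turan (n := m + 1) (r := r) hr0
    -- abbreviations
    set q := (m + 1) / r with hqdef
    set CL : Fin r → Finset (Fin m) := fun i => Finset.univ.filter (fun a => c' a = i)
      with hCLdef
    have hmaster : m * m = (∑ i : Fin r, #(CL i) * #(CL i)) + 2 * #G'.edgeFinset
        + 2 * #((Finset.univ ×ˢ Finset.univ).filter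
            fun p : Fin m × Fin m => c' p.1 < c' p.2 ∧ ¬ G'.Adj p.1 p.2) := hmaster0
    have hsumCL : ∑ i : Fin r, #(CL i) = m := by
      have h0 := (Finset.card_eq_sum_card_fiberwise
        (f := c') (s := (Finset.univ : Finset (Fin m))) (t := Finset.univ)
        (fun a _ => Finset.mem_univ _)).symm
      rw [Finset.card_univ, Fintype.card_fin] at h0
      exact h0
    have htle : ∀ i, #(U i) ≤ #(CL i) := by
      intro i
      apply Finset.card_le_card
      exact Finset.filter_subset_filter _ (Finset.subset_univ A)
    -- decompositions
    have hsplit_t := Brouwer5.sum_split (fun i => #(U i)) i₀ j₀ hij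
    have hsplit_CL := Brouwer5.sum_split (fun i => #(CL i)) i₀ j₀ hij
    have hsplit_sq := Brouwer5.sum_split (fun i => #(CL i) * #(CL i)) i₀ j₀ hij
    have hbound_t : ∑ i ∈ (Finset.univ.erase i₀).erase j₀, #(U i)
        ≤ ∑ i ∈ (Finset.univ.erase i₀).erase j₀, #(CL i) :=
      Finset.sum_le_sum fun i _ => htle i
    obtain ⟨r2, hr2eq⟩ : ∃ r2, r = r2 + 2 := ⟨r - 2, by omega⟩
    have htang_sum : (2 * q + 1) * ∑ i ∈ (Finset.univ.erase i₀).erase j₀, #(CL i)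
        ≤ (∑ i ∈ (Finset.univ.erase i₀).erase j₀, #(CL i) * #(CL i))
          + r2 * (q * q + q) := by
      have hcardE2 : #((Finset.univ.erase i₀).erase j₀) = r2 := by
        rw [Brouwer5.card_E2 i₀ j₀ hij]
        omega
      calc (2 * q + 1) * ∑ i ∈ (Finset.univ.erase i₀).erase j₀, #(CL i)
          = ∑ i ∈ (Finset.univ.erase i₀).erase j₀, (2 * q + 1) * #(CL i) := by
            rw [Finset.mul_sum]
        _ ≤ ∑ i ∈ (Finset.univ.erase i₀).erase j₀, (#(CL i) * #(CL i) + (q * q + q)) :=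
            Finset.sum_le_sum fun i _ => Brouwer5.tang1 _ _
        _ = (∑ i ∈ (Finset.univ.erase i₀).erase j₀, #(CL i) * #(CL i))
              + r2 * (q * q + q) := by
            rw [Finset.sum_add_distrib, Finset.sum_const, hcardE2, smul_eq_mul]
    have htang_i := Brouwer5.tang2 (#(CL i₀)) q
    have htang_j := Brouwer5.tang2 (#(CL j₀)) q
    have hprod : #(U i₀) + #(U j₀) ≤ #(U i₀) * #(U j₀) + 1 :=
      Brouwer5.addle _ _ (Finset.card_pos.2 (hne i₀)) (Finset.card_pos.2 (hne j₀))
    have hrr : r * (q * q + q) = r2 * (q * q + q) + 2 * (q * q + q) := by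
      rw [hr2eq]
      ring
    rw [hrr] at htwo
    -- final contradiction
    zify at hmaster
    zify at htrans
    zify at hedges
    zify at he
    zify at hv
    zify at htwo
    zify at hsumCL
    zify at hsplit_t
    zify at hsplit_CL
    zify at hsplit_sq
    zify at hbound_t
    zify at htang_sum
    zify at htang_i
    zify at htang_j
    zify at hprod
    zify at hsplitU
    zify at hAdeg
    have hSC2 : (∑ x ∈ (Finset.univ.erase i₀).erase j₀, (#(CL x) : ℤ))
        = (m : ℤ) - #(CL i₀) - #(CL j₀) := by linarith [hsumCL, hsplit_CL]
    have hmulkey : (2 * (q : ℤ) + 1) * ∑ x ∈ (Finset.univ.erase i₀).erase j₀, (#(CL x) : ℤ)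
        = (2 * (q : ℤ) + 1) * m - (2 * (q : ℤ) + 1) * #(CL i₀)
          - (2 * (q : ℤ) + 1) * #(CL j₀) := by
      rw [hSC2]; ring
    linarith [hmaster, htrans, hedges, he, hv, htwo, hsumCL, hsplit_t, hsplit_CL,
      hsplit_sq, hbound_t, htang_sum, htang_i, htang_j, hprod, hsplitU, hAdeg, hmulkey]

end BrouwerMain

/-- Brouwer's stability theorem: for `r ≥ 2` and `n ≥ 2r+1`, every `K_{r+1}`-free graph
on `n` vertices with at least `t_r(n) - ⌊n/r⌋ + 2` edges is `r`-partite. -/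
theorem stmt_15 (r n : ℕ) (hr : 2 ≤ r) (hn : 2 * r + 1 ≤ n)
    (G : SimpleGraph (Fin n)) (hG : G.CliqueFree (r + 1))
    (he : ((turanGraph n r).edgeSet.ncard : ℤ) - (n / r : ℕ) + 2 ≤
      (G.edgeSet.ncard : ℤ)) :
    ∃ c : Fin n → Fin r, ∀ u v : Fin n, G.Adj u v → c u ≠ c v := by
  classical
  haveI hdec : DecidableRel G.Adj := Classical.decRel _
  have h1 : (turanGraph n r).edgeSet.ncard = #(turanGraph n r).edgeFinset := by
    rw [← SimpleGraph.coe_edgeFinset, Set.ncard_coe_finset]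
  have h2 : G.edgeSet.ncard = #G.edgeFinset := by
    rw [← SimpleGraph.coe_edgeFinset, Set.ncard_coe_finset]
  rw [h1, h2] at he
  have heN : #(turanGraph n r).edgeFinset + 2 ≤ #G.edgeFinset + n / r := by omega
  exact BrouwerMain.aux r hr n G hdec hn hG heN
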